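/- Let K, T, B > 0. There is a constant β depending only on K, T, B with the following property. Let C : ℝ → ℝ³ be a C⁴ curve parametrized by arclength with C(0) = 0, |C''| ≤ K, |C'''| ≤ T, |C⁗| ≤ B, and let s₁ > 0. Then | C(s₁) · (C'(0) × C'(s₁)) | ≤ β·s₁⁴; that is, the (unnormalized) height of the chord direction C(s₁)/|C(s₁)| above the plane spanned by C'(0) and C'(s₁) is of order s₁⁴. -/

import Mathlib

noncomputable section

/-- Cross product on `ℝ³`. -/
def cross3 (v w : EuclideanSpace ℝ (Fin 3)) : EuclideanSpace ℝ (Fin 3) :=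
  WithLp.toLp 2 ![v 1 * w 2 - v 2 * w 1, v 2 * w 0 - v 0 * w 2, v 0 * w 1 - v 1 * w 0]

/-- Euclidean inner product on `ℝ³`. -/
def dot3 (v w : EuclideanSpace ℝ (Fin 3)) : ℝ := inner ℝ v w


lemma dot3_cross3_eq (x y z : EuclideanSpace ℝ (Fin 3)) :
    dot3 x (cross3 y z) =
      x 0 * (y 1 * z 2 - y 2 * z 1) + x 1 * (y 2 * z 0 - y 0 * z 2)
        + x 2 * (y 0 * z 1 - y 1 * z 0) := by
  simp [dot3, cross3, PiLp.inner_apply, Fin.sum_univ_three, RCLike.inner_apply, conj_trivial]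
  ring

lemma coord_le_norm (x : EuclideanSpace ℝ (Fin 3)) (i : Fin 3) : |x i| ≤ ‖x‖ := by
  rw [EuclideanSpace.norm_eq]
  rw [show |x i| = Real.sqrt ((x i)^2) by rw [Real.sqrt_sq_eq_abs]]
  apply Real.sqrt_le_sqrt
  have := Finset.single_le_sum (f := fun j => ‖x j‖ ^ 2) (fun j _ => by positivity)
    (Finset.mem_univ i)
  simpa [Real.norm_eq_abs, sq_abs] using this

lemma D_self_right (x y : EuclideanSpace ℝ (Fin 3)) : dot3 x (cross3 y x) = 0 := by
  rw [dot3_cross3_eq]; ring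

lemma D_self_left (x z : EuclideanSpace ℝ (Fin 3)) : dot3 x (cross3 x z) = 0 := by
  rw [dot3_cross3_eq]; ring

lemma abs_D_le (x y z : EuclideanSpace ℝ (Fin 3)) :
    |dot3 x (cross3 y z)| ≤ 6 * (‖x‖ * (‖y‖ * ‖z‖)) := by
  have key : ∀ a b c : Fin 3, |x a * (y b * z c - y c * z b)| ≤ 2 * (‖x‖ * (‖y‖ * ‖z‖)) := by
    intro a b c
    rw [abs_mul]
    have h1 : |y b * z c - y c * z b| ≤ |y b * z c| + |y c * z b| := abs_sub _ _
    have hx := coord_le_norm x a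
    have h2 : |y b * z c| ≤ ‖y‖ * ‖z‖ := by
      rw [abs_mul]
      exact mul_le_mul (coord_le_norm y b) (coord_le_norm z c) (abs_nonneg _) (norm_nonneg _)
    have h3 : |y c * z b| ≤ ‖y‖ * ‖z‖ := by
      rw [abs_mul]
      exact mul_le_mul (coord_le_norm y c) (coord_le_norm z b) (abs_nonneg _) (norm_nonneg _)
    nlinarith [abs_nonneg (x a), norm_nonneg x, norm_nonneg y, norm_nonneg z,
      abs_nonneg (y b * z c - y c * z b)]
  rw [dot3_cross3_eq]
  calc |x 0 * (y 1 * z 2 - y 2 * z 1) + x 1 * (y 2 * z 0 - y 0 * z 2)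
        + x 2 * (y 0 * z 1 - y 1 * z 0)|
      ≤ |x 0 * (y 1 * z 2 - y 2 * z 1) + x 1 * (y 2 * z 0 - y 0 * z 2)|
        + |x 2 * (y 0 * z 1 - y 1 * z 0)| := abs_add_le _ _
    _ ≤ |x 0 * (y 1 * z 2 - y 2 * z 1)| + |x 1 * (y 2 * z 0 - y 0 * z 2)|
        + |x 2 * (y 0 * z 1 - y 1 * z 0)| := by
          have := abs_add_le (x 0 * (y 1 * z 2 - y 2 * z 1)) (x 1 * (y 2 * z 0 - y 0 * z 2))
          linarith
    _ ≤ 6 * (‖x‖ * (‖y‖ * ‖z‖)) := by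
          have := key 0 1 2
          have := key 1 2 0
          have := key 2 0 1
          linarith

lemma hasDerivAt_proj {u : ℝ → EuclideanSpace ℝ (Fin 3)} {u' : EuclideanSpace ℝ (Fin 3)}
    {s : ℝ} (hu : HasDerivAt u u' s) (i : Fin 3) :
    HasDerivAt (fun t => u t i) (u' i) s := by
  exact (EuclideanSpace.proj i).hasFDerivAt.comp_hasDerivAt s hu

lemma hasDerivAt_D (y : EuclideanSpace ℝ (Fin 3)) {u v : ℝ → EuclideanSpace ℝ (Fin 3)}
    {u' v' : EuclideanSpace ℝ (Fin 3)} {s : ℝ}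
    (hu : HasDerivAt u u' s) (hv : HasDerivAt v v' s) :
    HasDerivAt (fun t => dot3 (u t) (cross3 y (v t)))
      (dot3 u' (cross3 y (v s)) + dot3 (u s) (cross3 y v')) s := by
  have hu0 := hasDerivAt_proj hu 0
  have hu1 := hasDerivAt_proj hu 1
  have hu2 := hasDerivAt_proj hu 2
  have hv0 := hasDerivAt_proj hv 0
  have hv1 := hasDerivAt_proj hv 1
  have hv2 := hasDerivAt_proj hv 2
  have H : HasDerivAt (fun t => (u t 0) * (y 1 * v t 2 - y 2 * v t 1)
      + (u t 1) * (y 2 * v t 0 - y 0 * v t 2) + (u t 2) * (y 0 * v t 1 - y 1 * v t 0))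
      ((u' 0 * (y 1 * v s 2 - y 2 * v s 1) + u s 0 * (y 1 * v' 2 - y 2 * v' 1)
      + (u' 1 * (y 2 * v s 0 - y 0 * v s 2) + u s 1 * (y 2 * v' 0 - y 0 * v' 2)))
      + (u' 2 * (y 0 * v s 1 - y 1 * v s 0) + u s 2 * (y 0 * v' 1 - y 1 * v' 0))) s := by
    exact ((hu0.mul ((hv2.const_mul (y 1)).sub (hv1.const_mul (y 2)))).add
      (hu1.mul ((hv0.const_mul (y 2)).sub (hv2.const_mul (y 0))))).add
      (hu2.mul ((hv1.const_mul (y 0)).sub (hv0.const_mul (y 1))))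
  have e : (fun t => dot3 (u t) (cross3 y (v t)))
      = fun t => (u t 0) * (y 1 * v t 2 - y 2 * v t 1)
      + (u t 1) * (y 2 * v t 0 - y 0 * v t 2) + (u t 2) * (y 0 * v t 1 - y 1 * v t 0) :=
    funext fun t => dot3_cross3_eq _ _ _
  rw [e, dot3_cross3_eq, dot3_cross3_eq]
  convert H using 1
  ring

lemma step_bound {g g' : ℝ → ℝ} {c d : ℝ} {n : ℕ} {s₁ : ℝ}
    (hg : ∀ s, HasDerivAt g (g' s) s) (h0 : g 0 = 0)
    (hd : c ≤ d * (n + 1)) (hdc : 0 ≤ c)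
    (hb : ∀ s ∈ Set.Icc (0:ℝ) s₁, |g' s| ≤ c * s ^ n) :
    ∀ s ∈ Set.Icc (0:ℝ) s₁, |g s| ≤ d * s ^ (n + 1) := by
  have hB : ∀ x : ℝ, HasDerivAt (fun t => d * t ^ (n + 1)) (d * (n + 1) * x ^ n) x := by
    intro x
    have h := (hasDerivAt_pow (n + 1) x).const_mul d
    convert h using 1
    · rfl
    · rfl
    push_cast [Nat.add_sub_cancel]
    ring
  intro s hs
  have := image_norm_le_of_norm_deriv_right_le_deriv_boundary
    (f := g) (f' := g') (a := 0) (b := s₁)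
    (fun x _ => (hg x).continuousAt.continuousWithinAt)
    (fun x _ => (hg x).hasDerivWithinAt)
    (B := fun t => d * t ^ (n + 1)) (B' := fun x => d * (n + 1) * x ^ n)
    (by simp [h0]) hB
    (fun x hx => by
      rw [Real.norm_eq_abs]
      refine (hb x ⟨hx.1, hx.2.le⟩).trans ?_
      exact mul_le_mul_of_nonneg_right hd (pow_nonneg hx.1 n)) hs
  simpa [Real.norm_eq_abs] using this


/-- There is a constant `β = β(K,T,B)` such that for any unit-speed `C⁴`
curve `C` with `C 0 = 0`, `|C''| ≤ K`, `|C'''| ≤ T`, `|C⁗| ≤ B`, and any `s₁ > 0`,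
`|C(s₁)·(C'(0) × C'(s₁))| ≤ β·s₁⁴`: the unnormalized height of the chord direction above
the plane spanned by `C'(0)` and `C'(s₁)` is of order `s₁⁴`. -/
theorem chord_height_above_tangent_plane (K T B : ℝ) (hK : 0 < K) (hT : 0 < T) (hB : 0 < B) :
    ∃ β : ℝ, ∀ (C : ℝ → EuclideanSpace ℝ (Fin 3)) (s₁ : ℝ),
      ContDiff ℝ 4 C → C 0 = 0 →
      (∀ s : ℝ, ‖deriv C s‖ = 1) →
      (∀ s : ℝ, ‖iteratedDeriv 2 C s‖ ≤ K) →
      (∀ s : ℝ, ‖iteratedDeriv 3 C s‖ ≤ T) →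
      (∀ s : ℝ, ‖iteratedDeriv 4 C s‖ ≤ B) →
      0 < s₁ →
      |dot3 (C s₁) (cross3 (deriv C 0) (deriv C s₁))| ≤ β * s₁ ^ 4 := by
  refine ⟨12 * K * T + 6 * B, ?_⟩
  intro C s₁ hC h0 hunit h2 h3 h4 hs₁
  set a := deriv C 0 with ha
  set M : ℝ := 12 * K * T + 6 * B with hM
  have hM0 : 0 ≤ M := by positivity
  -- differentiability facts
  have d0 : Differentiable ℝ C := hC.differentiable (by norm_num)
  have d1 : Differentiable ℝ (deriv C) := by
    have := hC.differentiable_iteratedDeriv 1 (by norm_num)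
    simpa [iteratedDeriv_one] using this
  have d2 : Differentiable ℝ (iteratedDeriv 2 C) :=
    hC.differentiable_iteratedDeriv 2 (by norm_num)
  have d3 : Differentiable ℝ (iteratedDeriv 3 C) :=
    hC.differentiable_iteratedDeriv 3 (by norm_num)
  have h1' : ∀ s, HasDerivAt C (deriv C s) s := fun s => (d0 s).hasDerivAt
  have h2' : ∀ s, HasDerivAt (deriv C) (iteratedDeriv 2 C s) s := fun s => by
    have : iteratedDeriv 2 C = deriv (deriv C) := by
      rw [show (2:ℕ) = 1 + 1 from rfl, iteratedDeriv_succ, iteratedDeriv_one]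
    rw [this]
    exact (d1 s).hasDerivAt
  have h3' : ∀ s, HasDerivAt (iteratedDeriv 2 C) (iteratedDeriv 3 C s) s := fun s => by
    have e : iteratedDeriv 3 C = deriv (iteratedDeriv 2 C) := iteratedDeriv_succ
    rw [e]
    exact (d2 s).hasDerivAt
  have h4' : ∀ s, HasDerivAt (iteratedDeriv 3 C) (iteratedDeriv 4 C s) s := fun s => by
    have e : iteratedDeriv 4 C = deriv (iteratedDeriv 3 C) := iteratedDeriv_succ
    rw [e]
    exact (d3 s).hasDerivAt
  -- mean value bounds
  have hCle : ∀ s ∈ Set.Icc (0:ℝ) s₁, ‖C s‖ ≤ s := by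
    intro s hs
    have := Convex.norm_image_sub_le_of_norm_deriv_le (f := C) (s := Set.univ)
      (fun x _ => d0 x) (fun x _ => (hunit x).le) convex_univ (Set.mem_univ 0) (Set.mem_univ s)
    simpa [h0, abs_of_nonneg hs.1] using this
  have hC'le : ∀ s ∈ Set.Icc (0:ℝ) s₁, ‖deriv C s - a‖ ≤ K * s := by
    intro s hs
    have := Convex.norm_image_sub_le_of_norm_deriv_le (f := deriv C) (s := Set.univ)
      (fun x _ => d1 x)
      (fun x _ => by
        rw [show deriv (deriv C) x = iteratedDeriv 2 C x by
          rw [show (2:ℕ) = 1 + 1 from rfl, iteratedDeriv_succ, iteratedDeriv_one]]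
        exact h2 x)
      convex_univ (Set.mem_univ 0) (Set.mem_univ s)
    simpa [ha, abs_of_nonneg hs.1] using this
  have hanorm : ‖a‖ = 1 := hunit 0
  -- the functions
  set f₀ : ℝ → ℝ := fun t => dot3 (C t) (cross3 a (deriv C t)) with hf₀
  set f₁ : ℝ → ℝ := fun t => dot3 (C t) (cross3 a (iteratedDeriv 2 C t)) with hf₁
  set f₂ : ℝ → ℝ := fun t => dot3 (deriv C t) (cross3 a (iteratedDeriv 2 C t))
      + dot3 (C t) (cross3 a (iteratedDeriv 3 C t)) with hf₂
  set f₃ : ℝ → ℝ := fun t => 2 * dot3 (deriv C t) (cross3 a (iteratedDeriv 3 C t))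
      + dot3 (C t) (cross3 a (iteratedDeriv 4 C t)) with hf₃
  have D01 : ∀ s, HasDerivAt f₀ (f₁ s) s := by
    intro s
    have := hasDerivAt_D a (h1' s) (h2' s)
    rw [hf₀, hf₁]
    convert this using 1
    rw [D_self_right]
    ring
  have D12 : ∀ s, HasDerivAt f₁ (f₂ s) s := fun s => hasDerivAt_D a (h1' s) (h3' s)
  have D23 : ∀ s, HasDerivAt f₂ (f₃ s) s := by
    intro s
    have := (hasDerivAt_D a (h2' s) (h3' s)).add (hasDerivAt_D a (h1' s) (h4' s))
    rw [hf₂, hf₃]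
    convert this using 1
    · rfl
    · rfl
    · rfl
    rw [D_self_right]
    ring
  -- bound on f₃
  have b3 : ∀ s ∈ Set.Icc (0:ℝ) s₁, |f₃ s| ≤ M * s ^ 1 := by
    intro s hs
    have e1 : dot3 (deriv C s) (cross3 a (iteratedDeriv 3 C s))
        = dot3 (deriv C s - a) (cross3 a (iteratedDeriv 3 C s)) := by
      rw [dot3, dot3, inner_sub_left]
      have : (inner ℝ a (cross3 a (iteratedDeriv 3 C s)) : ℝ) = 0 := D_self_left _ _
      rw [this]; ring
    have t1 : |dot3 (deriv C s) (cross3 a (iteratedDeriv 3 C s))| ≤ 6 * (K * s * T) := by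
      rw [e1]
      refine (abs_D_le _ _ _).trans ?_
      have := hC'le s hs
      have h3s := h3 s
      have : ‖deriv C s - a‖ * (‖a‖ * ‖iteratedDeriv 3 C s‖) ≤ K * s * T := by
        rw [hanorm, one_mul]
        exact mul_le_mul (hC'le s hs) h3s (norm_nonneg _) (mul_nonneg hK.le hs.1)
      linarith
    have t2 : |dot3 (C s) (cross3 a (iteratedDeriv 4 C s))| ≤ 6 * (s * B) := by
      refine (abs_D_le _ _ _).trans ?_
      have : ‖C s‖ * (‖a‖ * ‖iteratedDeriv 4 C s‖) ≤ s * B := by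
        rw [hanorm, one_mul]
        exact mul_le_mul (hCle s hs) (h4 s) (norm_nonneg _) hs.1
      linarith
    calc |f₃ s| ≤ 2 * |dot3 (deriv C s) (cross3 a (iteratedDeriv 3 C s))|
          + |dot3 (C s) (cross3 a (iteratedDeriv 4 C s))| := by
          rw [hf₃]
          refine (abs_add_le _ _).trans ?_
          rw [abs_mul]
          norm_num
      _ ≤ 2 * (6 * (K * s * T)) + 6 * (s * B) := by linarith
      _ = M * s ^ 1 := by rw [hM]; ring
  -- initial values
  have f₂0 : f₂ 0 = 0 := by
    rw [hf₂]
    simp only [h0]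
    rw [show deriv C 0 = a from rfl, D_self_left]
    have : dot3 (0 : EuclideanSpace ℝ (Fin 3)) (cross3 a (iteratedDeriv 3 C 0)) = 0 := by
      rw [dot3, inner_zero_left]
    rw [this]; ring
  have f₁0 : f₁ 0 = 0 := by
    rw [hf₁]
    simp only [h0]
    rw [dot3, inner_zero_left]
  have f₀0 : f₀ 0 = 0 := by
    rw [hf₀]
    simp only [h0]
    rw [dot3, inner_zero_left]
  -- iterate
  have b2 : ∀ s ∈ Set.Icc (0:ℝ) s₁, |f₂ s| ≤ M * s ^ 2 :=
    step_bound D23 f₂0 (by nlinarith) hM0 b3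
  have b1 : ∀ s ∈ Set.Icc (0:ℝ) s₁, |f₁ s| ≤ M * s ^ 3 :=
    step_bound D12 f₁0 (by nlinarith) hM0 b2
  have b0 : ∀ s ∈ Set.Icc (0:ℝ) s₁, |f₀ s| ≤ M * s ^ 4 :=
    step_bound D01 f₀0 (by nlinarith) hM0 b1
  have := b0 s₁ ⟨hs₁.le, le_refl _⟩
  simpa [hf₀, hM] using this


end
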